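/- Under type II relations, for all integers n, m, s, t: α(n,m)β(s,t) = q^{nt-ms} β(s,t)γ(n,m), where α(n,m) = α₁^n α₂^m, γ(n,m) = γ₁^n γ₂^m, β(s,t) = t α₁^s β₂ γ₂^{t-1} + s β₁ γ₁^{s-1} γ₂^t. -/

import Mathlib

section
variable {k A : Type*} [Field k] [Ring A] [Algebra k A]

lemma typeII_conj_zpow (u v : Aˣ) (x : A) (c : k) (hc : c ≠ 0)
    (h : (u : A) * x = c • (x * v)) :
    ∀ n : ℤ, ((u ^ n : Aˣ) : A) * x = c ^ n • (x * ((v ^ n : Aˣ) : A)) := by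
  have hinv : ((u⁻¹ : Aˣ) : A) * x = c⁻¹ • (x * ((v⁻¹ : Aˣ) : A)) := by
    have h2 : x * (v : A) = c⁻¹ • ((u : A) * x) := by
      rw [h, smul_smul, inv_mul_cancel₀ hc, one_smul]
    calc ((u⁻¹ : Aˣ) : A) * x
        = ((u⁻¹ : Aˣ) : A) * ((x * v) * ((v⁻¹ : Aˣ) : A)) := by
          rw [mul_assoc, Units.mul_inv, mul_one]
      _ = c⁻¹ • (x * ((v⁻¹ : Aˣ) : A)) := by
          rw [h2, smul_mul_assoc, mul_smul_comm, ← mul_assoc, ← mul_assoc, Units.inv_mul, one_mul]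
  intro n
  induction n using Int.induction_on with
  | zero => simp
  | succ n ih =>
      have hsu : ((u ^ ((n : ℤ) + 1) : Aˣ) : A) = (u : A) * ((u ^ (n : ℤ) : Aˣ) : A) := by
        rw [add_comm, zpow_add, zpow_one, Units.val_mul]
      have hsv : (v : A) * ((v ^ (n : ℤ) : Aˣ) : A) = ((v ^ ((n : ℤ) + 1) : Aˣ) : A) := by
        rw [add_comm, zpow_add, zpow_one, Units.val_mul]
      calc ((u ^ ((n : ℤ) + 1) : Aˣ) : A) * x
          = (u : A) * (((u ^ (n : ℤ) : Aˣ) : A) * x) := by rw [hsu, mul_assoc]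
        _ = c ^ (n : ℤ) • ((u : A) * (x * ((v ^ (n : ℤ) : Aˣ) : A))) := by
            rw [ih, mul_smul_comm]
        _ = c ^ (n : ℤ) • ((c • (x * v)) * ((v ^ (n : ℤ) : Aˣ) : A)) := by
            rw [← mul_assoc, h]
        _ = c ^ ((n : ℤ) + 1) • (x * ((v ^ ((n : ℤ) + 1) : Aˣ) : A)) := by
            rw [smul_mul_assoc, smul_smul, mul_assoc, hsv, zpow_add_one₀ hc, mul_comm]
  | pred n ih =>
      have hsu : ((u ^ (-(n : ℤ) - 1) : Aˣ) : A) = ((u⁻¹ : Aˣ) : A) * ((u ^ (-(n : ℤ)) : Aˣ) : A) := by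
        rw [show -(n : ℤ) - 1 = -1 + -(n : ℤ) by ring, zpow_add, zpow_neg_one, Units.val_mul]
      have hsv : ((v⁻¹ : Aˣ) : A) * ((v ^ (-(n : ℤ)) : Aˣ) : A) = ((v ^ (-(n : ℤ) - 1) : Aˣ) : A) := by
        rw [show -(n : ℤ) - 1 = -1 + -(n : ℤ) by ring, zpow_add, zpow_neg_one, Units.val_mul]
      calc ((u ^ (-(n : ℤ) - 1) : Aˣ) : A) * x
          = ((u⁻¹ : Aˣ) : A) * (((u ^ (-(n : ℤ)) : Aˣ) : A) * x) := by rw [hsu, mul_assoc]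
        _ = c ^ (-(n : ℤ)) • (((u⁻¹ : Aˣ) : A) * (x * ((v ^ (-(n : ℤ)) : Aˣ) : A))) := by
            rw [ih, mul_smul_comm]
        _ = c ^ (-(n : ℤ)) • ((c⁻¹ • (x * ((v⁻¹ : Aˣ) : A))) * ((v ^ (-(n : ℤ)) : Aˣ) : A)) := by
            rw [← mul_assoc, hinv]
        _ = c ^ (-(n : ℤ) - 1) • (x * ((v ^ (-(n : ℤ) - 1) : Aˣ) : A)) := by
            rw [smul_mul_assoc, smul_smul, mul_assoc, hsv, zpow_sub_one₀ hc, mul_comm]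

lemma typeII_comm_zpow (u v : Aˣ) (c : k) (hc : c ≠ 0)
    (h : (u : A) * v = c • ((v : A) * u)) :
    ∀ n m : ℤ, ((u ^ n : Aˣ) : A) * ((v ^ m : Aˣ) : A)
      = c ^ (n * m) • (((v ^ m : Aˣ) : A) * ((u ^ n : Aˣ) : A)) := by
  intro n m
  have h1 : (v : A) * (u : A) = c⁻¹ • ((u : A) * v) := by
    rw [h, smul_smul, inv_mul_cancel₀ hc, one_smul]
  have h2 := typeII_conj_zpow v v (u : A) c⁻¹ (inv_ne_zero hc) h1 m
  have h3 : (u : A) * ((v ^ m : Aˣ) : A) = c ^ m • (((v ^ m : Aˣ) : A) * (u : A)) := by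
    rw [h2, smul_smul, inv_zpow, ← zpow_neg, ← zpow_add₀ hc]
    simp
  have h4 := typeII_conj_zpow u u ((v ^ m : Aˣ) : A) (c ^ m) (zpow_ne_zero _ hc) h3 n
  rw [h4, ← zpow_mul, mul_comm m n]

end
section
variable {k A : Type*} [Field k] [Ring A] [Algebra k A]

lemma typeII_swap_ext {c : k} {a b a' b' : A} (h : a * b = c • (a' * b')) (z : A) :
    a * (b * z) = c • (a' * (b' * z)) := by
  rw [← mul_assoc, h, smul_mul_assoc, mul_assoc]

lemma typeII_merge_ext {a b ab : A} (h : a * b = ab) (z : A) :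
    a * (b * z) = ab * z := by rw [← mul_assoc, h]

end

set_option maxHeartbeats 1000000 in
theorem typeII_MND_monomials {k A : Type*} [Field k] [CharZero k] [Ring A] [Algebra k A]
    (q : k) (hq0 : q ≠ 0)
    (α₁ γ₁ α₂ γ₂ : Aˣ) (β₁ β₂ : A)
    (hI1 : (α₁ : A) * (γ₁ : A) = (γ₁ : A) * (α₁ : A))
    (hI2 : (α₂ : A) * (γ₂ : A) = (γ₂ : A) * (α₂ : A))
    (hB1 : (α₁ : A) * β₁ = β₁ * (γ₁ : A)) (hB2 : (α₂ : A) * β₂ = β₂ * (γ₂ : A))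
    (hAA : (α₁ : A) * (α₂ : A) = q • ((α₂ : A) * (α₁ : A)))
    (hAC : (α₁ : A) * (γ₂ : A) = q⁻¹ • ((γ₂ : A) * (α₁ : A)))
    (hCA : (α₂ : A) * (γ₁ : A) = q • ((γ₁ : A) * (α₂ : A)))
    (hCC : (γ₁ : A) * (γ₂ : A) = q • ((γ₂ : A) * (γ₁ : A)))
    (hAB : (α₁ : A) * β₂ = q • (β₂ * (γ₁ : A)))
    (hBC : β₁ * (γ₂ : A) = q • ((α₂ : A) * β₁)) :
    ∀ n m s t : ℤ,
      (((α₁ ^ n : Aˣ) : A) * ((α₂ ^ m : Aˣ) : A)) *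
        (t • (((α₁ ^ s : Aˣ) : A) * β₂ * ((γ₂ ^ (t - 1) : Aˣ) : A)) +
         s • (β₁ * ((γ₁ ^ (s - 1) : Aˣ) : A) * ((γ₂ ^ t : Aˣ) : A)))
      = q ^ (n * t - m * s) •
        ((t • (((α₁ ^ s : Aˣ) : A) * β₂ * ((γ₂ ^ (t - 1) : Aˣ) : A)) +
          s • (β₁ * ((γ₁ ^ (s - 1) : Aˣ) : A) * ((γ₂ ^ t : Aˣ) : A))) *
         (((γ₁ ^ n : Aˣ) : A) * ((γ₂ ^ m : Aˣ) : A))) := by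
  intro n m s t
  have A1B2 : ∀ a : ℤ, ((α₁ ^ a : Aˣ) : A) * β₂ = q ^ a • (β₂ * ((γ₁ ^ a : Aˣ) : A)) :=
    typeII_conj_zpow α₁ γ₁ β₂ q hq0 hAB
  have A2B2 : ∀ a : ℤ, ((α₂ ^ a : Aˣ) : A) * β₂ = β₂ * ((γ₂ ^ a : Aˣ) : A) := by
    intro a
    have := typeII_conj_zpow α₂ γ₂ β₂ (1 : k) one_ne_zero (by simpa using hB2) a
    simpa using this
  have A1B1 : ∀ a : ℤ, ((α₁ ^ a : Aˣ) : A) * β₁ = β₁ * ((γ₁ ^ a : Aˣ) : A) := by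
    intro a
    have := typeII_conj_zpow α₁ γ₁ β₁ (1 : k) one_ne_zero (by simpa using hB1) a
    simpa using this
  have A2B1 : ∀ a : ℤ, ((α₂ ^ a : Aˣ) : A) * β₁ = q ^ (-a) • (β₁ * ((γ₂ ^ a : Aˣ) : A)) := by
    intro a
    have hr : (α₂ : A) * β₁ = q⁻¹ • (β₁ * (γ₂ : A)) := by
      rw [hBC, smul_smul, inv_mul_cancel₀ hq0, one_smul]
    have := typeII_conj_zpow α₂ γ₂ β₁ q⁻¹ (inv_ne_zero hq0) hr a
    rwa [inv_zpow, ← zpow_neg] at this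
  have A2A1 : ∀ a b : ℤ, ((α₂ ^ a : Aˣ) : A) * ((α₁ ^ b : Aˣ) : A)
      = q ^ (-(a * b)) • (((α₁ ^ b : Aˣ) : A) * ((α₂ ^ a : Aˣ) : A)) := by
    intro a b
    have hr : (α₂ : A) * (α₁ : A) = q⁻¹ • ((α₁ : A) * α₂) := by
      rw [hAA, smul_smul, inv_mul_cancel₀ hq0, one_smul]
    have := typeII_comm_zpow α₂ α₁ q⁻¹ (inv_ne_zero hq0) hr a b
    rwa [inv_zpow, ← zpow_neg] at this
  have C2C1 : ∀ a b : ℤ, ((γ₂ ^ a : Aˣ) : A) * ((γ₁ ^ b : Aˣ) : A)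
      = q ^ (-(a * b)) • (((γ₁ ^ b : Aˣ) : A) * ((γ₂ ^ a : Aˣ) : A)) := by
    intro a b
    have hr : (γ₂ : A) * (γ₁ : A) = q⁻¹ • ((γ₁ : A) * γ₂) := by
      rw [hCC, smul_smul, inv_mul_cancel₀ hq0, one_smul]
    have := typeII_comm_zpow γ₂ γ₁ q⁻¹ (inv_ne_zero hq0) hr a b
    rwa [inv_zpow, ← zpow_neg] at this
  have M1 : ∀ a b : ℤ, ((α₁ ^ a : Aˣ) : A) * ((α₁ ^ b : Aˣ) : A) = ((α₁ ^ (a + b) : Aˣ) : A) := by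
    intro a b; rw [zpow_add, Units.val_mul]
  have M2 : ∀ a b : ℤ, ((γ₁ ^ a : Aˣ) : A) * ((γ₁ ^ b : Aˣ) : A) = ((γ₁ ^ (a + b) : Aˣ) : A) := by
    intro a b; rw [zpow_add, Units.val_mul]
  have M3 : ∀ a b : ℤ, ((γ₂ ^ a : Aˣ) : A) * ((γ₂ ^ b : Aˣ) : A) = ((γ₂ ^ (a + b) : Aˣ) : A) := by
    intro a b; rw [zpow_add, Units.val_mul]
  have qmul : ∀ a b : ℤ, q ^ a * q ^ b = q ^ (a + b) := fun a b => (zpow_add₀ hq0 a b).symm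
  have hX : (((α₁ ^ n : Aˣ) : A) * ((α₂ ^ m : Aˣ) : A)) *
      (((α₁ ^ s : Aˣ) : A) * β₂ * ((γ₂ ^ (t - 1) : Aˣ) : A))
      = q ^ (n * t - m * s) •
        ((((α₁ ^ s : Aˣ) : A) * β₂ * ((γ₂ ^ (t - 1) : Aˣ) : A)) *
          (((γ₁ ^ n : Aˣ) : A) * ((γ₂ ^ m : Aˣ) : A))) := by
    simp only [mul_assoc]
    simp only [A2A1, A2B2, A1B2, C2C1, M1, M2, M3,
      typeII_swap_ext (A2A1 _ _), typeII_merge_ext (A2B2 _), typeII_swap_ext (A1B2 _),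
      typeII_swap_ext (C2C1 _ _), typeII_merge_ext (M1 _ _), typeII_merge_ext (M2 _ _),
      typeII_merge_ext (M3 _ _),
      mul_assoc, smul_mul_assoc, mul_smul_comm, smul_smul, qmul]
    rw [show (n + s : ℤ) = s + n from add_comm n s,
      show (m + (t - 1) : ℤ) = t - 1 + m from add_comm _ _,
      show (s + -(m * s) + n : ℤ) = n * t - m * s + (-((t - 1) * n) + s) by ring]
  have hY : (((α₁ ^ n : Aˣ) : A) * ((α₂ ^ m : Aˣ) : A)) *
      (β₁ * ((γ₁ ^ (s - 1) : Aˣ) : A) * ((γ₂ ^ t : Aˣ) : A))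
      = q ^ (n * t - m * s) •
        ((β₁ * ((γ₁ ^ (s - 1) : Aˣ) : A) * ((γ₂ ^ t : Aˣ) : A)) *
          (((γ₁ ^ n : Aˣ) : A) * ((γ₂ ^ m : Aˣ) : A))) := by
    simp only [mul_assoc]
    simp only [A2A1, A2B1, A1B1, C2C1, M1, M2, M3,
      typeII_swap_ext (A2A1 _ _), typeII_swap_ext (A2B1 _), typeII_swap_ext (C2C1 _ _), typeII_swap_ext (A1B2 _),
      typeII_merge_ext (A1B1 _) , typeII_merge_ext (M1 _ _), typeII_merge_ext (M2 _ _),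
      typeII_merge_ext (M3 _ _),
      mul_assoc, smul_mul_assoc, mul_smul_comm, smul_smul, qmul]
    rw [show (n + (s - 1) : ℤ) = s - 1 + n from add_comm _ _,
      show (m + t : ℤ) = t + m from add_comm _ _,
      show (-m + -(m * (s - 1)) : ℤ) = n * t - m * s + -(t * n) by ring]
  calc (((α₁ ^ n : Aˣ) : A) * ((α₂ ^ m : Aˣ) : A)) *
      (t • (((α₁ ^ s : Aˣ) : A) * β₂ * ((γ₂ ^ (t - 1) : Aˣ) : A)) +
       s • (β₁ * ((γ₁ ^ (s - 1) : Aˣ) : A) * ((γ₂ ^ t : Aˣ) : A)))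
      = t • ((((α₁ ^ n : Aˣ) : A) * ((α₂ ^ m : Aˣ) : A)) *
          (((α₁ ^ s : Aˣ) : A) * β₂ * ((γ₂ ^ (t - 1) : Aˣ) : A))) +
        s • ((((α₁ ^ n : Aˣ) : A) * ((α₂ ^ m : Aˣ) : A)) *
          (β₁ * ((γ₁ ^ (s - 1) : Aˣ) : A) * ((γ₂ ^ t : Aˣ) : A))) := by
        rw [mul_add, mul_smul_comm, mul_smul_comm]
    _ = q ^ (n * t - m * s) •
        ((t • (((α₁ ^ s : Aˣ) : A) * β₂ * ((γ₂ ^ (t - 1) : Aˣ) : A)) +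
          s • (β₁ * ((γ₁ ^ (s - 1) : Aˣ) : A) * ((γ₂ ^ t : Aˣ) : A))) *
         (((γ₁ ^ n : Aˣ) : A) * ((γ₂ ^ m : Aˣ) : A))) := by
        rw [hX, hY, add_mul, smul_mul_assoc, smul_mul_assoc, smul_add,
          smul_comm (q ^ (n * t - m * s)) t, smul_comm (q ^ (n * t - m * s)) s]
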